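/- Let t, u, v, w ∈ Σ⁺ with π̄(u) = ε, π(v) = ε, vw ≡ wv, and tu ≡ ut in the queue monoid. Then there exist natural numbers x_t, x_{u1}, x_{u2}, x_v, x_w with x_t ≠ 0 and x_w ≠ 0 such that u^{x_{u1}} v^{x_v} w t^{x_t} w^{x_w} u^{x_{u2}} ≡ u^{x_{u1}} w u^{x_{u2}} w^{x_w} t^{x_t} v^{x_v}. -/

import Mathlib

/-- One-step action of a queue symbol (`Sum.inl a` = write `a`, `Sum.inr a` = read `a`)
on a queue state (`none` = error state ⊥). -/
def qstep (A : Type) [DecidableEq A] : Option (List A) → A ⊕ A → Option (List A)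
  | none, _ => none
  | some q, Sum.inl a => some (q ++ [a])
  | some q, Sum.inr a =>
      match q with
      | [] => none
      | b :: q' => if b = a then some q' else none

/-- Action of a word of queue operations on a queue state. -/
def qact (A : Type) [DecidableEq A] (q : Option (List A)) (u : List (A ⊕ A)) :
    Option (List A) :=
  u.foldl (qstep A) q

/-- Equivalence of action sequences: same effect on every queue state. -/
def QEquiv (A : Type) [DecidableEq A] (u v : List (A ⊕ A)) : Prop :=
  ∀ q : Option (List A), qact A q u = qact A q v

/-- The sequence of write actions of a word. -/
def wr {A : Type} (u : List A) : List (A ⊕ A) := u.map Sum.inl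

/-- The sequence of read actions of a word. -/
def rd {A : Type} (u : List A) : List (A ⊕ A) := u.map Sum.inr

/-- Positive projection: erase all read actions. -/
def ppr {A : Type} (u : List (A ⊕ A)) : List A :=
  u.filterMap (Sum.elim some fun _ => none)

/-- Negative projection: erase all write actions (mapping ā to a). -/
def npr {A : Type} (u : List (A ⊕ A)) : List A :=
  u.filterMap (Sum.elim (fun _ => none) some)

/-- `wpow p n` is the `n`-th power `pⁿ` of the word `p`. -/
def wpow {A : Type} (p : List A) (n : ℕ) : List A := (List.replicate n p).flatten

section Aux

variable {A : Type} [DecidableEq A]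

lemma qact_none (s : List (A ⊕ A)) : qact A none s = none := by
  induction s with
  | nil => rfl
  | cons x s ih => simpa [qact, qstep] using ih

lemma qact_append (q : Option (List A)) (x y : List (A ⊕ A)) :
    qact A q (x ++ y) = qact A (qact A q x) y :=
  List.foldl_append

@[simp] lemma npr_nil : npr ([] : List (A ⊕ A)) = [] := rfl
@[simp] lemma ppr_nil : ppr ([] : List (A ⊕ A)) = [] := rfl
@[simp] lemma npr_cons_inl (a : A) (s : List (A ⊕ A)) : npr (Sum.inl a :: s) = npr s := rfl
@[simp] lemma npr_cons_inr (a : A) (s : List (A ⊕ A)) : npr (Sum.inr a :: s) = a :: npr s := rfl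
@[simp] lemma ppr_cons_inl (a : A) (s : List (A ⊕ A)) : ppr (Sum.inl a :: s) = a :: ppr s := rfl
@[simp] lemma ppr_cons_inr (a : A) (s : List (A ⊕ A)) : ppr (Sum.inr a :: s) = ppr s := rfl

lemma npr_append (x y : List (A ⊕ A)) : npr (x ++ y) = npr x ++ npr y :=
  List.filterMap_append

lemma ppr_append (x y : List (A ⊕ A)) : ppr (x ++ y) = ppr x ++ ppr y :=
  List.filterMap_append

@[simp] lemma wpow_zero {B : Type} (p : List B) : wpow p 0 = [] := rfl

lemma wpow_succ {B : Type} (p : List B) (n : ℕ) : wpow p (n + 1) = p ++ wpow p n := by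
  simp [wpow, List.replicate_succ]

@[simp] lemma wpow_nil {B : Type} (n : ℕ) : wpow ([] : List B) n = [] := by
  induction n with
  | zero => rfl
  | succ n ih => rw [wpow_succ]; simpa using ih

lemma wpow_length {B : Type} (p : List B) (n : ℕ) : (wpow p n).length = n * p.length := by
  induction n with
  | zero => simp
  | succ n ih => rw [wpow_succ]; simp [ih, Nat.succ_mul, Nat.add_comm]

lemma npr_wpow (s : List (A ⊕ A)) (n : ℕ) : npr (wpow s n) = wpow (npr s) n := by
  induction n with
  | zero => rfl
  | succ n ih => rw [wpow_succ, wpow_succ, npr_append, ih]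

lemma ppr_wpow (s : List (A ⊕ A)) (n : ℕ) : ppr (wpow s n) = wpow (ppr s) n := by
  induction n with
  | zero => rfl
  | succ n ih => rw [wpow_succ, wpow_succ, ppr_append, ih]

lemma comm_wpow {B : Type} {x y : List B} (h : x ++ y = y ++ x) (n : ℕ) :
    wpow x n ++ y = y ++ wpow x n := by
  induction n with
  | zero => simp
  | succ n ih =>
      rw [wpow_succ, List.append_assoc, ih, ← List.append_assoc, h, List.append_assoc]

lemma comm_wpow_wpow {B : Type} {x y : List B} (h : x ++ y = y ++ x) (n m : ℕ) :
    wpow x n ++ wpow y m = wpow y m ++ wpow x n := by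
  induction m with
  | zero => simp
  | succ m ih =>
      rw [wpow_succ, ← List.append_assoc, comm_wpow h, List.append_assoc, ih,
        ← List.append_assoc]

lemma wpow_eq_wpow {B : Type} {x y : List B} (h : x ++ y = y ++ x) :
    wpow x y.length = wpow y x.length := by
  have hl : (wpow x y.length).length = (wpow y x.length).length := by
    simp [wpow_length, Nat.mul_comm]
  have hc := comm_wpow_wpow h y.length x.length
  calc wpow x y.length
      = (wpow x y.length ++ wpow y x.length).take (wpow x y.length).length :=
        List.take_left.symm
    _ = (wpow y x.length ++ wpow x y.length).take (wpow y x.length).length := by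
        rw [hc, hl]
    _ = wpow y x.length := List.take_left

lemma length_eq_ppr_npr (s : List (A ⊕ A)) :
    s.length = (ppr s).length + (npr s).length := by
  induction s with
  | nil => rfl
  | cons x s ih => cases x <;> simp [ih] <;> omega

/-- Running a word on a queue that starts with its read projection. -/
lemma qact_run (s : List (A ⊕ A)) : ∀ z : List A,
    qact A (some (npr s ++ z)) s = some (z ++ ppr s) := by
  induction s with
  | nil => intro z; simp [qact]
  | cons x s ih =>
      cases x with
      | inl a =>
          intro z
          show qact A (qstep A (some (npr s ++ z)) (Sum.inl a)) s = _
          have : qstep A (some (npr s ++ z)) (Sum.inl a) = some (npr s ++ (z ++ [a])) := by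
            simp [qstep]
          rw [this, ih (z ++ [a])]
          simp
      | inr a =>
          intro z
          show qact A (qstep A (some ((a :: npr s) ++ z)) (Sum.inr a)) s = _
          have : qstep A (some ((a :: npr s) ++ z)) (Sum.inr a) = some (npr s ++ z) := by
            simp [qstep]
          rw [this, ih z]
          simp

/-- If the queue is long enough but the read projection is not a prefix, the run fails. -/
lemma qact_fail (s : List (A ⊕ A)) : ∀ q : List A,
    (npr s).length ≤ q.length → ¬ npr s <+: q → qact A (some q) s = none := by
  induction s with
  | nil => intro q _ hnp; exact absurd (List.nil_prefix) hnp
  | cons x s ih =>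
      cases x with
      | inl a =>
          intro q hlen hnp
          show qact A (qstep A (some q) (Sum.inl a)) s = none
          have hq : qstep A (some q) (Sum.inl a) = some (q ++ [a]) := by simp [qstep]
          rw [hq]
          have hnl : (npr s).length ≤ q.length := by simpa using hlen
          refine ih _ (by simp; omega) ?_
          intro hp
          refine hnp ?_
          have : npr s = (q ++ [a]).take (npr s).length := by
            obtain ⟨r, hr⟩ := hp
            rw [← hr, List.take_left]
          rw [List.take_append_of_le_length hnl] at this
          exact this ▸ List.take_prefix _ _
      | inr a =>
          intro q hlen hnp
          have hq : (npr (Sum.inr a :: s)) = a :: npr s := rfl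
          cases q with
          | nil => simp [hq] at hlen
          | cons b q' =>
              show qact A (qstep A (some (b :: q')) (Sum.inr a)) s = none
              by_cases hba : b = a
              · subst hba
                have : qstep A (some (b :: q')) (Sum.inr b) = some q' := by simp [qstep]
                rw [this]
                have hnl : (npr s).length ≤ q'.length := by
                  rw [hq] at hlen; simpa using hlen
                refine ih _ hnl ?_
                intro hp
                exact hnp (by rw [hq]; exact List.cons_prefix_cons.2 ⟨rfl, hp⟩)
              · have : qstep A (some (b :: q')) (Sum.inr a) = none := by simp [qstep, hba]
                rw [this, qact_none]

/-- Running a concatenation of words on a queue that begins with all the reads: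
the writes accumulate at the end, in order. -/
lemma qact_seq (ss : List (List (A ⊕ A))) : ∀ z : List A,
    qact A (some ((ss.map npr).flatten ++ z)) ss.flatten = some (z ++ (ss.map ppr).flatten) := by
  induction ss with
  | nil => intro z; simp [qact]
  | cons s ss ih =>
      intro z
      rw [List.flatten_cons, qact_append]
      have h1 : (List.map npr (s :: ss)).flatten ++ z
          = npr s ++ ((List.map npr ss).flatten ++ z) := by
        simp
      rw [h1, qact_run s, List.append_assoc, ih (z ++ ppr s)]
      simp

lemma qact_seq_fail (ss : List (List (A ⊕ A))) : ∀ q : List A,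
    ((ss.map npr).flatten).length ≤ q.length → ¬ (ss.map npr).flatten <+: q →
    qact A (some q) ss.flatten = none := by
  induction ss with
  | nil => intro q _ hnp; exact absurd (List.nil_prefix) hnp
  | cons s ss ih =>
      intro q hlen hnp
      rw [List.flatten_cons, qact_append]
      have hlen' : (npr s).length + ((ss.map npr).flatten).length ≤ q.length := by
        rw [List.map_cons, List.flatten_cons, List.length_append] at hlen
        exact hlen
      by_cases h1 : npr s <+: q
      · obtain ⟨tail, htail⟩ := h1
        subst htail
        rw [qact_run s tail]
        have hrest : ¬ (ss.map npr).flatten <+: tail := by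
          intro hp
          obtain ⟨r, hr⟩ := hp
          exact hnp ⟨r, by simp [← hr]⟩
        have hlen2 : ((ss.map npr).flatten).length ≤ tail.length := by
          rw [List.length_append] at hlen'; omega
        refine ih _ (by rw [List.length_append]; omega) ?_
        intro hp
        refine hrest ?_
        have : (ss.map npr).flatten = (tail ++ ppr s).take ((ss.map npr).flatten).length := by
          obtain ⟨r, hr⟩ := hp
          rw [← hr, List.take_left]
        rw [List.take_append_of_le_length hlen2] at this
        exact this ▸ List.take_prefix _ _
      · rw [qact_fail s q (by omega) h1, qact_none]

end Aux

/-- For a write-only word `u`, a read-only word `v`, and words `t, w` with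
`tu ≡ ut` and `vw ≡ wv`, there is a relation
`u^{x_{u1}} v^{x_v} w t^{x_t} w^{x_w} u^{x_{u2}} ≡ u^{x_{u1}} w u^{x_{u2}} w^{x_w} t^{x_t} v^{x_v}`
with `x_t, x_w ≠ 0`. -/
theorem stmt12 (A : Type) [DecidableEq A] (t u v w : List (A ⊕ A))
    (ht : t ≠ []) (hu : u ≠ []) (hv : v ≠ []) (hw : w ≠ [])
    (hwr : npr u = []) (hrd : ppr v = [])
    (hvw : QEquiv A (v ++ w) (w ++ v)) (htu : QEquiv A (t ++ u) (u ++ t)) :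
    ∃ xt xu1 xu2 xv xw : ℕ, xt ≠ 0 ∧ xw ≠ 0 ∧
      QEquiv A (wpow u xu1 ++ wpow v xv ++ w ++ wpow t xt ++ wpow w xw ++ wpow u xu2)
        (wpow u xu1 ++ w ++ wpow u xu2 ++ wpow w xw ++ wpow t xt ++ wpow v xv) := by
  classical
  set α := ppr u with hα
  set β := npr v with hβ
  set D := npr t with hD
  set P := ppr t with hP
  set E := npr w with hE
  set F := ppr w with hF
  -- step 1 : P ++ α = α ++ P
  have hcomm2 : P ++ α = α ++ P := by
    have h := htu (some D)
    rw [qact_append, qact_append] at h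
    have h1 : qact A (some D) t = some P := by
      have := qact_run (A := A) t []
      simpa using this
    have h2 : qact A (some P) u = some (P ++ α) := by
      have := qact_run (A := A) u P
      rw [hwr] at this
      simpa using this
    have h3 : qact A (some D) u = some (D ++ α) := by
      have := qact_run (A := A) u D
      rw [hwr] at this
      simpa using this
    have h4 : qact A (some (D ++ α)) t = some (α ++ P) := qact_run t α
    rw [h1, h2, h3, h4] at h
    exact Option.some.inj h
  -- step 2 : β ++ E = E ++ β
  have hcomm1 : β ++ E = E ++ β := by
    have h := hvw (some (β ++ E))
    rw [qact_append, qact_append] at h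
    have h1 : qact A (some (β ++ E)) v = some E := by
      have := qact_run (A := A) v E
      rw [hrd] at this
      simpa using this
    have h2 : qact A (some E) w = some F := by
      have := qact_run (A := A) w []
      simpa using this
    rw [h1, h2] at h
    -- h : some F = qact A (qact A (some (β ++ E)) w) v
    by_cases hp1 : E <+: β ++ E
    · obtain ⟨y, hy⟩ := hp1
      rw [← hy, qact_run w y] at h
      have hylen : y.length = β.length := by
        have := congrArg List.length hy
        simp at this; omega
      by_cases hp2 : β <+: y ++ F
      · obtain ⟨y2, hy2⟩ := hp2
        rw [← hy2] at h
        have h5 : qact A (some (β ++ y2)) v = some y2 := by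
          have := qact_run (A := A) v y2
          rw [hrd] at this
          simpa using this
        rw [h5] at h
        have hy2F : y2 = F := (Option.some.inj h).symm
        subst hy2F
        have hyb : β = y := List.append_cancel_right hy2
        subst hyb
        exact hy.symm
      · exfalso
        rw [qact_fail v (y ++ F) (by rw [← hβ]; rw [List.length_append]; omega)
          (by rw [hβ] at hp2; exact hp2)] at h
        exact Option.some_ne_none _ h
    · exfalso
      rw [qact_fail w (β ++ E) (by rw [← hE, List.length_append]; omega)
        (by rw [hE] at hp1; exact hp1), qact_none] at h
      exact Option.some_ne_none _ h
  -- exponents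
  set a := α.length with ha
  set b := β.length with hb
  set d := P.length with hd
  set e := E.length with he
  have hK1 : wpow β e = wpow E b := wpow_eq_wpow hcomm1
  have hK2 : wpow P a = wpow α d := wpow_eq_wpow hcomm2
  -- the two stage-lists
  set ssL : List (List (A ⊕ A)) := [wpow v e, w, wpow t a, wpow w b, wpow u d] with hssL
  set ssR : List (List (A ⊕ A)) := [w, wpow u d, wpow w b, wpow t a, wpow v e] with hssR
  have hNL : (ssL.map npr).flatten = wpow β e ++ (E ++ (wpow D a ++ wpow E b)) := by
    simp [hssL, npr_wpow, hwr, ← hβ, ← hD, ← hE]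
  have hNR : (ssR.map npr).flatten = E ++ (wpow E b ++ (wpow D a ++ wpow β e)) := by
    simp [hssR, npr_wpow, hwr, ← hβ, ← hD, ← hE]
  have hNN : (ssL.map npr).flatten = (ssR.map npr).flatten := by
    rw [hNL, hNR, hK1]
    rw [← List.append_assoc, comm_wpow (rfl : E ++ E = E ++ E) b, List.append_assoc]
  have hPP : (ssL.map ppr).flatten = (ssR.map ppr).flatten := by
    have hL : (ssL.map ppr).flatten = F ++ (wpow P a ++ (wpow F b ++ wpow α d)) := by
      simp [hssL, ppr_wpow, hrd, ← hα, ← hP, ← hF]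
    have hR : (ssR.map ppr).flatten = F ++ (wpow α d ++ (wpow F b ++ wpow P a)) := by
      simp [hssR, ppr_wpow, hrd, ← hα, ← hP, ← hF]
    rw [hL, hR, hK2]
  set c := ((ssL.map npr).flatten).length with hc
  have hane : a ≠ 0 := by
    intro h0
    apply hu
    have hlen := length_eq_ppr_npr u
    rw [hwr, ← hα] at hlen
    refine List.length_eq_zero_iff.1 ?_
    rw [hlen, ← ha, h0]
    simp
  have hbne : b ≠ 0 := by
    intro h0
    apply hv
    have hlen := length_eq_ppr_npr v
    rw [hrd, ← hβ] at hlen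
    refine List.length_eq_zero_iff.1 ?_
    rw [hlen, ← hb, h0]
    simp
  refine ⟨a, c, d, e, b, hane, hbne, ?_⟩
  -- main equivalence
  intro q
  cases q with
  | none => rw [qact_none, qact_none]
  | some q =>
      have hwordL : wpow u c ++ wpow v e ++ w ++ wpow t a ++ wpow w b ++ wpow u d
          = wpow u c ++ ssL.flatten := by
        simp [hssL, List.append_assoc]
      have hwordR : wpow u c ++ w ++ wpow u d ++ wpow w b ++ wpow t a ++ wpow v e
          = wpow u c ++ ssR.flatten := by
        simp [hssR, List.append_assoc]
      rw [hwordL, hwordR, qact_append, qact_append]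
      have hpad : qact A (some q) (wpow u c) = some (q ++ wpow α c) := by
        have := qact_run (A := A) (wpow u c) q
        rw [npr_wpow, hwr, wpow_nil, ppr_wpow, ← hα] at this
        simpa using this
      rw [hpad]
      have hαpos : 0 < α.length := Nat.pos_of_ne_zero (by rw [← ha]; exact hane)
      have hlenN : ((ssL.map npr).flatten).length ≤ (q ++ wpow α c).length := by
        rw [List.length_append, wpow_length, ← hc]
        have h1 : c ≤ c * α.length := Nat.le_mul_of_pos_right c hαpos
        omega
      by_cases hNp : (ssL.map npr).flatten <+: q ++ wpow α c
      · obtain ⟨z, hz⟩ := hNp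
        rw [← hz, qact_seq ssL z, hNN, qact_seq ssR z, hPP]
      · rw [qact_seq_fail ssL _ hlenN hNp, qact_seq_fail ssR _ (by rw [← hNN]; exact hlenN)
          (by rw [← hNN]; exact hNp)]
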